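/- arXiv:2206.11965 — 3 statements merged into one kernel-verified Lean document; each statement's English description precedes it below -/
import Mathlib

section
/- Let μ > 0, λ > −2μ, k ∈ ℂ, and let φ : ℝ² → ℂ be twice continuously differentiable and satisfy the Helmholtz equation Δφ + k²φ = 0 on ℝ². Then the stress tensor of the vector-curl field curl⃗ φ satisfies σ(curl⃗ φ) = 2μ (Hφ) Q + μ k² φ Q on ℝ², where Hφ is the Hessian matrix of φ and Q is the 2×2 matrix with rows (0, −1) and (1, 0). -/
noncomputable section

open Real

/-- Partial derivative in the first coordinate direction. -/
def pd1 (f : ℝ × ℝ → ℂ) (x : ℝ × ℝ) : ℂ := fderiv ℝ f x (1, 0)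
/-- Partial derivative in the second coordinate direction. -/
def pd2 (f : ℝ × ℝ → ℂ) (x : ℝ × ℝ) : ℂ := fderiv ℝ f x (0, 1)
/-- Laplacian of a scalar field on ℝ². -/
def lap (f : ℝ × ℝ → ℂ) (x : ℝ × ℝ) : ℂ := pd1 (pd1 f) x + pd2 (pd2 f) x
/-- Divergence of the vector field (u1, u2). -/
def divU (u1 u2 : ℝ × ℝ → ℂ) (x : ℝ × ℝ) : ℂ := pd1 u1 x + pd2 u2 x
/-- Scalar curl of the vector field (u1, u2). -/
def curlU (u1 u2 : ℝ × ℝ → ℂ) (x : ℝ × ℝ) : ℂ := pd1 u2 x - pd2 u1 x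

/-- (1,1)-entry of the stress tensor σ(u) = 2μ ε(u) + λ (div u) I₂. -/
def sig11 (μ lam : ℝ) (u1 u2 : ℝ × ℝ → ℂ) (x : ℝ × ℝ) : ℂ :=
  2 * (μ : ℂ) * pd1 u1 x + (lam : ℂ) * divU u1 u2 x
/-- (1,2)-entry (= (2,1)-entry) of the stress tensor. -/
def sig12 (μ : ℝ) (u1 u2 : ℝ × ℝ → ℂ) (x : ℝ × ℝ) : ℂ :=
  (μ : ℂ) * (pd1 u2 x + pd2 u1 x)
/-- (2,2)-entry of the stress tensor. -/
def sig22 (μ lam : ℝ) (u1 u2 : ℝ × ℝ → ℂ) (x : ℝ × ℝ) : ℂ :=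
  2 * (μ : ℂ) * pd2 u2 x + (lam : ℂ) * divU u1 u2 x

/-- If φ is a C² solution of Δφ + k²φ = 0, then σ(curl⃗ φ) = 2μ (Hφ)Q + μk²φ Q,
where Q has rows (0,−1) and (1,0); stated entrywise. -/
theorem stmt9 (μ lam : ℝ) (hμ : 0 < μ) (hlam : -(2 * μ) < lam) (k : ℂ)
    (φ : ℝ × ℝ → ℂ) (hφ : ContDiff ℝ 2 φ)
    (hH : ∀ x, lap φ x + k ^ 2 * φ x = 0) :
    ∀ x,
      sig11 μ lam (pd2 φ) (fun y => -pd1 φ y) x = 2 * (μ : ℂ) * pd1 (pd2 φ) x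
      ∧ sig12 μ (pd2 φ) (fun y => -pd1 φ y) x
          = -(2 * (μ : ℂ) * pd1 (pd1 φ) x) - (μ : ℂ) * k ^ 2 * φ x
      ∧ sig12 μ (pd2 φ) (fun y => -pd1 φ y) x
          = 2 * (μ : ℂ) * pd2 (pd2 φ) x + (μ : ℂ) * k ^ 2 * φ x
      ∧ sig22 μ lam (pd2 φ) (fun y => -pd1 φ y) x = -(2 * (μ : ℂ) * pd2 (pd1 φ) x) := by
  intro x
  have hdφ : Differentiable ℝ φ := hφ.differentiable (by norm_num)
  have hf' : ContDiff ℝ 1 (fun y => fderiv ℝ φ y) :=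
    hφ.fderiv_right (by norm_num)
  have hdf' : DifferentiableAt ℝ (fun y => fderiv ℝ φ y) x :=
    (hf'.differentiable (by norm_num)).differentiableAt
  -- expressing pd_i (pd_j φ) in terms of the second derivative
  have key : ∀ v w : ℝ × ℝ,
      fderiv ℝ (fun y => fderiv ℝ φ y v) x w = fderiv ℝ (fun y => fderiv ℝ φ y) x w v := by
    intro v w
    have := fderiv_clm_apply hdf' (differentiableAt_const v)
    rw [this]
    simp
  have e1 : pd1 φ = fun y => fderiv ℝ φ y (1, 0) := rfl
  have e2 : pd2 φ = fun y => fderiv ℝ φ y (0, 1) := rfl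
  have hswap : pd1 (pd2 φ) x = pd2 (pd1 φ) x := by
    have hsym := second_derivative_symmetric (f' := fun y => fderiv ℝ φ y)
      (fun y => (hdφ y).hasFDerivAt) hdf'.hasFDerivAt (1, 0) (0, 1)
    simp only [pd1, pd2, e1, e2]
    rw [key (0,1) (1,0), key (1,0) (0,1), hsym]
  have hneg1 : pd1 (fun y => -pd1 φ y) x = -pd1 (pd1 φ) x := by
    simp only [pd1]
    rw [fderiv_fun_neg]; rw [← e1]; simp
  have hneg2 : pd2 (fun y => -pd1 φ y) x = -pd2 (pd1 φ) x := by
    simp only [pd1, pd2]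
    rw [fderiv_fun_neg]; rw [← e1]; simp
  have hhelm : pd1 (pd1 φ) x + pd2 (pd2 φ) x = -(k ^ 2 * φ x) := by
    have := hH x
    simp only [lap] at this
    linear_combination this
  refine ⟨?_, ?_, ?_, ?_⟩
  · simp only [sig11, divU, hneg2, hswap]; ring
  · simp only [sig12, hneg1]
    linear_combination (μ : ℂ) * hhelm
  · simp only [sig12, hneg1]
    linear_combination -(μ : ℂ) * hhelm
  · simp only [sig22, divU, hneg2, hswap]; ring
end
end

section
/- Let μ > 0, λ > −2μ, ω > 0, k_p² = ω²/(λ+2μ), k_s² = ω²/μ. Let φ_p, φ_s : ℝ² → ℂ be twice continuously differentiable solutions of Δφ_p + k_p²φ_p = 0 and Δφ_s + k_s²φ_s = 0 on ℝ², let u = ∇φ_p + curl⃗ φ_s, let n = (n₁,n₂) ∈ ℝ² be a unit vector and t = (−n₂,n₁). Then the tangential component of the traction satisfies (σ(u)n)·t = 2μ tᵀ(Hφ_p)n − 2μ nᵀ(Hφ_s)n − μ k_s² φ_s at every point of ℝ². -/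
noncomputable section

open Real

/-- First component of u = ∇φ_p + curl⃗ φ_s. -/
def uHD1 (φp φs : ℝ × ℝ → ℂ) (x : ℝ × ℝ) : ℂ := pd1 φp x + pd2 φs x
/-- Second component of u = ∇φ_p + curl⃗ φ_s. -/
def uHD2 (φp φs : ℝ × ℝ → ℂ) (x : ℝ × ℝ) : ℂ := pd2 φp x - pd1 φs x

/-- Quadratic form vᵀ (Hφ) w of the Hessian of φ at x, for v, w ∈ ℝ². -/
def hq (φ : ℝ × ℝ → ℂ) (v w : ℝ × ℝ) (x : ℝ × ℝ) : ℂ :=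
  ((v.1 * w.1 : ℝ) : ℂ) * pd1 (pd1 φ) x + ((v.1 * w.2 : ℝ) : ℂ) * pd1 (pd2 φ) x
  + ((v.2 * w.1 : ℝ) : ℂ) * pd2 (pd1 φ) x + ((v.2 * w.2 : ℝ) : ℂ) * pd2 (pd2 φ) x


lemma key (φ : ℝ × ℝ → ℂ) (h : ContDiff ℝ 2 φ) (v w x : ℝ × ℝ) :
    fderiv ℝ (fun y => fderiv ℝ φ y v) x w = fderiv ℝ (fderiv ℝ φ) x w v := by
  have hd : DifferentiableAt ℝ (fderiv ℝ φ) x :=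
    ((h.fderiv_right (m := 1) le_rfl).differentiable one_ne_zero) x
  have h1 : HasFDerivAt (fun y => fderiv ℝ φ y v)
      ((ContinuousLinearMap.apply ℝ ℂ v).comp (fderiv ℝ (fderiv ℝ φ) x)) x :=
    (ContinuousLinearMap.apply ℝ ℂ v).hasFDerivAt.comp x hd.hasFDerivAt
  rw [h1.fderiv]; rfl

lemma pdv_diff (φ : ℝ × ℝ → ℂ) (h : ContDiff ℝ 2 φ) (v x : ℝ × ℝ) :
    DifferentiableAt ℝ (fun y => fderiv ℝ φ y v) x := by
  have hd : DifferentiableAt ℝ (fderiv ℝ φ) x :=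
    ((h.fderiv_right (m := 1) le_rfl).differentiable one_ne_zero) x
  exact ((ContinuousLinearMap.apply ℝ ℂ v).hasFDerivAt.comp x hd.hasFDerivAt).differentiableAt

lemma pd_swap (φ : ℝ × ℝ → ℂ) (h : ContDiff ℝ 2 φ) (x : ℝ × ℝ) :
    pd1 (pd2 φ) x = pd2 (pd1 φ) x := by
  have hs := (h.contDiffAt (x := x)).isSymmSndFDerivAt (by norm_num)
  show fderiv ℝ (fun y => fderiv ℝ φ y (0,1)) x (1,0)
      = fderiv ℝ (fun y => fderiv ℝ φ y (1,0)) x (0,1)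
  rw [key φ h _ _ x, key φ h _ _ x]
  exact hs.eq (1,0) (0,1)

/-- For C² Helmholtz solutions φ_p, φ_s with wave numbers k_p, k_s and
u = ∇φ_p + curl⃗ φ_s, the tangential traction component satisfies
(σ(u)n)·t = 2μ tᵀ(Hφ_p)n − 2μ nᵀ(Hφ_s)n − μ k_s² φ_s. -/
theorem stmt11 (μ lam ω : ℝ) (hμ : 0 < μ) (hlam : -(2 * μ) < lam) (hω : 0 < ω)
    (kp2 ks2 : ℝ) (hkp : kp2 = ω ^ 2 / (lam + 2 * μ)) (hks : ks2 = ω ^ 2 / μ)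
    (φp φs : ℝ × ℝ → ℂ) (hφp : ContDiff ℝ 2 φp) (hφs : ContDiff ℝ 2 φs)
    (hHp : ∀ x, lap φp x + (kp2 : ℂ) * φp x = 0)
    (hHs : ∀ x, lap φs x + (ks2 : ℂ) * φs x = 0)
    (n : ℝ × ℝ) (hn : n.1 ^ 2 + n.2 ^ 2 = 1) :
    ∀ x,
      (sig11 μ lam (uHD1 φp φs) (uHD2 φp φs) x * (n.1 : ℂ)
          + sig12 μ (uHD1 φp φs) (uHD2 φp φs) x * (n.2 : ℂ)) * ((-n.2 : ℝ) : ℂ)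
        + (sig12 μ (uHD1 φp φs) (uHD2 φp φs) x * (n.1 : ℂ)
          + sig22 μ lam (uHD1 φp φs) (uHD2 φp φs) x * (n.2 : ℂ)) * (n.1 : ℂ)
      = 2 * (μ : ℂ) * hq φp (-n.2, n.1) n x - 2 * (μ : ℂ) * hq φs n n x
        - (μ : ℂ) * (ks2 : ℂ) * φs x := by
  intro x
  have hs' := hHs x
  have e11 : pd1 (uHD1 φp φs) x = pd1 (pd1 φp) x + pd1 (pd2 φs) x := by
    show fderiv ℝ (fun y => fderiv ℝ φp y (1,0) + fderiv ℝ φs y (0,1)) x (1,0) = _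
    rw [fderiv_fun_add (pdv_diff φp hφp _ x) (pdv_diff φs hφs _ x)]; rfl
  have e12 : pd2 (uHD1 φp φs) x = pd2 (pd1 φp) x + pd2 (pd2 φs) x := by
    show fderiv ℝ (fun y => fderiv ℝ φp y (1,0) + fderiv ℝ φs y (0,1)) x (0,1) = _
    rw [fderiv_fun_add (pdv_diff φp hφp _ x) (pdv_diff φs hφs _ x)]; rfl
  have e21 : pd1 (uHD2 φp φs) x = pd1 (pd2 φp) x - pd1 (pd1 φs) x := by
    show fderiv ℝ (fun y => fderiv ℝ φp y (0,1) - fderiv ℝ φs y (1,0)) x (1,0) = _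
    rw [fderiv_fun_sub (pdv_diff φp hφp _ x) (pdv_diff φs hφs _ x)]; rfl
  have e22 : pd2 (uHD2 φp φs) x = pd2 (pd2 φp) x - pd2 (pd1 φs) x := by
    show fderiv ℝ (fun y => fderiv ℝ φp y (0,1) - fderiv ℝ φs y (1,0)) x (0,1) = _
    rw [fderiv_fun_sub (pdv_diff φp hφp _ x) (pdv_diff φs hφs _ x)]; rfl
  have symp := pd_swap φp hφp x
  have syms := pd_swap φs hφs x
  have hn' : ((n.1 : ℂ)) ^ 2 + ((n.2 : ℂ)) ^ 2 = 1 := by exact_mod_cast congrArg Complex.ofReal hn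
  simp only [lap] at hs'
  simp only [sig11, sig12, sig22, divU, hq, e11, e12, e21, e22, symp, syms]
  push_cast
  linear_combination ((μ : ℂ) * (pd1 (pd1 φs) x + pd2 (pd2 φs) x)) * hn' + (μ : ℂ) * hs'
end
end

section
/- For every nonzero integer m, the Kussmaul–Martensen quadrature identity holds: −(1/(2π)) ∫₀^{2π} log(sin²(τ/2)) cos(mτ) dτ = 1/|m|. -/
open Real intervalIntegral MeasureTheory Filter Set

private lemma abs_sin_nat_mul_le' (n : ℕ) (x : ℝ) :
    |Real.sin ((n : ℝ) * x)| ≤ (n : ℝ) * |Real.sin x| := by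
  induction n with
  | zero => simp
  | succ n ih =>
    have h : ((n : ℝ) + 1) * x = (n : ℝ) * x + x := by ring
    push_cast
    rw [h, Real.sin_add]
    calc |Real.sin ((n:ℝ)*x) * Real.cos x + Real.cos ((n:ℝ)*x) * Real.sin x|
        ≤ |Real.sin ((n:ℝ)*x) * Real.cos x| + |Real.cos ((n:ℝ)*x) * Real.sin x| := abs_add_le _ _
      _ ≤ |Real.sin ((n:ℝ)*x)| * 1 + 1 * |Real.sin x| := by
          rw [abs_mul, abs_mul]
          gcongr
          · exact Real.abs_cos_le_one x
          · exact Real.abs_cos_le_one _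
      _ ≤ (n:ℝ) * |Real.sin x| * 1 + 1 * |Real.sin x| := by gcongr
      _ = ((n:ℝ) + 1) * |Real.sin x| := by ring

private lemma aux_sum (n : ℕ) (τ : ℝ) :
    Real.sin (((n:ℝ) + 1/2) * τ) =
      Real.sin (τ/2) + 2 * ∑ k ∈ Finset.range n, Real.sin (τ/2) * Real.cos (((k:ℝ)+1) * τ) := by
  induction n with
  | zero =>
    norm_num [show (1/2:ℝ)*τ = τ/2 from by ring]
  | succ n ih =>
    rw [Finset.sum_range_succ]
    have h := Real.sin_sub_sin (((n:ℝ) + 1 + 1/2) * τ) (((n:ℝ) + 1/2) * τ)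
    have e1 : ((((n:ℝ)+1+1/2)*τ) - (((n:ℝ)+1/2)*τ))/2 = τ/2 := by ring
    have e2 : ((((n:ℝ)+1+1/2)*τ) + (((n:ℝ)+1/2)*τ))/2 = ((n:ℝ)+1)*τ := by ring
    rw [e1, e2] at h
    push_cast at ih ⊢
    linarith [h, ih]

private lemma dirichlet (n : ℕ) (τ : ℝ) :
    Real.sin (((n:ℝ)+1) * τ) * Real.cos (τ/2) =
      Real.sin (τ/2) * (1 + Real.cos (((n:ℝ)+1)*τ)
        + 2 * ∑ k ∈ Finset.range n, Real.cos (((k:ℝ)+1)*τ)) := by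
  have h := aux_sum n τ
  have h2 : Real.sin (((n:ℝ)+1/2)*τ) = Real.sin (((n:ℝ)+1)*τ) * Real.cos (τ/2)
      - Real.cos (((n:ℝ)+1)*τ) * Real.sin (τ/2) := by
    rw [← Real.sin_sub]; ring_nf
  have hs : Real.sin (τ/2) * ∑ k ∈ Finset.range n, Real.cos (((k:ℝ)+1)*τ)
      = ∑ k ∈ Finset.range n, Real.sin (τ/2) * Real.cos (((k:ℝ)+1)*τ) :=
    Finset.mul_sum _ _ _
  rw [h2] at h
  nlinarith [h, hs]

private lemma logint : IntervalIntegrable Real.log volume 0 (2*π) := by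
  have hπ := Real.pi_pos
  have hg : IntervalIntegrable (fun x : ℝ => 2 * x ^ (-(1:ℝ)/2) + 2*π) volume 0 (2*π) :=
    ((intervalIntegrable_rpow' (by norm_num)).const_mul 2).add intervalIntegrable_const
  refine hg.mono_fun Real.measurable_log.aestronglyMeasurable ?_
  filter_upwards [MeasureTheory.ae_restrict_mem measurableSet_uIoc] with x hx
  rw [Set.uIoc_of_le (by positivity)] at hx
  obtain ⟨h0, h2⟩ := hx
  have hr : (0:ℝ) < x ^ (-(1:ℝ)/2) := Real.rpow_pos_of_pos h0 _
  have hlog : Real.log (x ^ (-(1:ℝ)/2)) = (-(1:ℝ)/2) * Real.log x := Real.log_rpow h0 _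
  have h3 : Real.log (x ^ (-(1:ℝ)/2)) ≤ x ^ (-(1:ℝ)/2) - 1 := Real.log_le_sub_one_of_pos hr
  have h4 : Real.log x ≤ x - 1 := Real.log_le_sub_one_of_pos h0
  rw [Real.norm_eq_abs, Real.norm_eq_abs]
  have hRHS : 0 ≤ 2 * x ^ (-(1:ℝ)/2) + 2*π := by positivity
  rw [abs_of_nonneg hRHS]
  rcases abs_cases (Real.log x) with ⟨he, _⟩ | ⟨he, _⟩ <;> rw [he] <;> nlinarith

private lemma loga : IntervalIntegrable (fun τ : ℝ => |Real.log τ|) volume 0 (2*π) :=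
  logint.abs

private lemma logb : IntervalIntegrable (fun τ : ℝ => |Real.log (2*π - τ)|) volume 0 (2*π) := by
  have h := (logint.comp_sub_left (2*π)).abs
  simpa using h.symm

private lemma sin_half_lb {τ : ℝ} (h0 : 0 < τ) (h2 : τ < 2*π) :
    τ * (2*π - τ) / (2*π^2) ≤ Real.sin (τ/2) := by
  have hπ := Real.pi_pos
  rcases le_or_gt τ π with hle | hlt
  · have hms := Real.mul_le_sin (x := τ/2) (by linarith) (by linarith)
    have h1 : τ * (2*π - τ) / (2*π^2) ≤ 2/π * (τ/2) := by
      rw [div_le_iff₀ (by positivity)]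
      have he : 2/π * (τ/2) * (2*π^2) = 2*π*τ := by field_simp
      rw [he]; nlinarith
    linarith
  · have hms := Real.mul_le_sin (x := π - τ/2) (by linarith) (by linarith)
    rw [Real.sin_pi_sub] at hms
    have h1 : τ * (2*π - τ) / (2*π^2) ≤ 2/π * (π - τ/2) := by
      rw [div_le_iff₀ (by positivity)]
      have he : 2/π * (π - τ/2) * (2*π^2) = 2*π*(2*π - τ) := by field_simp
      rw [he]; nlinarith
    linarith

private lemma integrand_integrable (N : ℝ) :
    IntervalIntegrable (fun τ => Real.log ((Real.sin (τ/2))^2) * Real.cos (N*τ))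
      volume 0 (2*π) := by
  have hπ := Real.pi_pos
  have hlog2 : 0 ≤ Real.log (2*π^2) := Real.log_nonneg (by nlinarith [Real.pi_gt_three])
  have h1 : IntervalIntegrable
      (fun τ : ℝ => 2*|Real.log τ| + 2*|Real.log (2*π - τ)| + 2*Real.log (2*π^2))
      volume 0 (2*π) :=
    ((loga.const_mul 2).add (logb.const_mul 2)).add intervalIntegrable_const
  refine h1.mono_fun ?_ ?_
  · apply Measurable.aestronglyMeasurable
    exact (Real.measurable_log.comp ((Real.measurable_sin.comp (measurable_id.div_const 2)).pow_const 2)).mul (Real.measurable_cos.comp (measurable_id.const_mul N))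
  · filter_upwards [MeasureTheory.ae_restrict_mem measurableSet_uIoc] with τ hτ
    rw [Set.uIoc_of_le (by positivity)] at hτ
    obtain ⟨h0, h2⟩ := hτ
    have hRHS0 : 0 ≤ 2*|Real.log τ| + 2*|Real.log (2*π - τ)| + 2*Real.log (2*π^2) := by
      positivity
    rw [Real.norm_eq_abs, Real.norm_eq_abs, abs_of_nonneg hRHS0]
    rcases eq_or_lt_of_le h2 with heq | hlt
    · have : Real.sin (τ/2) = 0 := by rw [heq]; simpa using Real.sin_pi
      rw [this]
      simpa using hRHS0
    · have hlb := sin_half_lb h0 hlt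
      have h2πτ : 0 < 2*π - τ := by linarith
      have hsinpos : 0 < Real.sin (τ/2) := lt_of_lt_of_le (by positivity) hlb
      have hloglb : Real.log (τ * (2*π - τ) / (2*π^2)) ≤ Real.log (Real.sin (τ/2)) :=
        Real.log_le_log (by positivity) hlb
      have hexp : Real.log (τ * (2*π - τ) / (2*π^2))
          = Real.log τ + Real.log (2*π - τ) - Real.log (2*π^2) := by
        rw [Real.log_div (by positivity) (by positivity), Real.log_mul (by positivity) (by positivity)]
      have hsle : Real.log (Real.sin (τ/2)) ≤ 0 :=
        Real.log_nonpos hsinpos.le (Real.sin_le_one _)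
      have e1 : Real.log ((Real.sin (τ/2))^2) = 2 * Real.log (Real.sin (τ/2)) := by
        rw [Real.log_pow]; push_cast; ring
      have hb : |Real.log ((Real.sin (τ/2))^2) * Real.cos (N*τ)|
          ≤ |Real.log ((Real.sin (τ/2))^2)| := by
        rw [abs_mul]
        exact mul_le_of_le_one_right (abs_nonneg _) (Real.abs_cos_le_one _)
      have hab : |Real.log ((Real.sin (τ/2))^2)| = -(2 * Real.log (Real.sin (τ/2))) := by
        rw [e1, abs_of_nonpos (by linarith)]
      rw [hexp] at hloglb
      have hta := neg_abs_le (Real.log τ)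
      have htb := neg_abs_le (Real.log (2*π - τ))
      linarith [hb, hab.le, hab.ge]

private lemma tendsto_G (n : ℕ) (a : ℝ) (s : Set ℝ) (hs : s ⊆ Set.Icc 0 (2*π))
    (hsin : Tendsto (fun τ => Real.sin (τ/2)) (nhdsWithin a s) (nhdsWithin 0 (Set.Ioi 0))) :
    Tendsto (fun τ => Real.sin (((n:ℝ)+1)*τ)/((n:ℝ)+1) * Real.log ((Real.sin (τ/2))^2))
      (nhdsWithin a s) (nhds 0) := by
  have hN0 : (0:ℝ) < (n:ℝ)+1 := by positivity
  have h1 : Tendsto (fun x : ℝ => Real.log x * x) (nhdsWithin 0 (Set.Ioi 0)) (nhds 0) := by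
    have := tendsto_log_mul_rpow_nhdsGT_zero (r := 1) one_pos
    simpa using this
  have hb : Tendsto (fun τ => 4 * -(Real.log (Real.sin (τ/2)) * Real.sin (τ/2)))
      (nhdsWithin a s) (nhds 0) := by
    have h2 := (h1.comp hsin).neg.const_mul (4:ℝ)
    simpa using h2
  apply squeeze_zero_norm' ?_ hb
  filter_upwards [self_mem_nhdsWithin, hsin self_mem_nhdsWithin] with τ hτs hpos
  have hpos' : 0 < Real.sin (τ/2) := hpos
  have hle1 : Real.sin (τ/2) ≤ 1 := Real.sin_le_one _
  have hlog0 : Real.log (Real.sin (τ/2)) ≤ 0 := Real.log_nonpos hpos'.le hle1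
  have h3 : |Real.sin (((n:ℝ)+1)*τ)| ≤ ((n:ℝ)+1) * |Real.sin τ| := by
    have := abs_sin_nat_mul_le' (n+1) τ
    push_cast at this
    exact this
  have h4 : |Real.sin τ| ≤ 2 * Real.sin (τ/2) := by
    have hst : Real.sin τ = 2 * Real.sin (τ/2) * Real.cos (τ/2) := by
      rw [← Real.sin_two_mul]; congr 1; ring
    rw [hst, abs_mul, abs_mul]
    calc |(2:ℝ)| * |Real.sin (τ/2)| * |Real.cos (τ/2)|
        ≤ |(2:ℝ)| * |Real.sin (τ/2)| * 1 := by
          gcongr; exact Real.abs_cos_le_one _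
      _ = 2 * Real.sin (τ/2) := by
          rw [abs_of_pos hpos']; norm_num
  have e1 : Real.log ((Real.sin (τ/2))^2) = 2 * Real.log (Real.sin (τ/2)) := by
    rw [Real.log_pow]; push_cast; ring
  rw [Real.norm_eq_abs, abs_mul, abs_div, e1]
  have h5 : |Real.sin (((n:ℝ)+1)*τ)| / |((n:ℝ)+1)| ≤ 2 * Real.sin (τ/2) := by
    rw [abs_of_pos hN0, div_le_iff₀ hN0]
    calc |Real.sin (((n:ℝ)+1)*τ)| ≤ ((n:ℝ)+1) * |Real.sin τ| := h3
      _ ≤ ((n:ℝ)+1) * (2 * Real.sin (τ/2)) := by gcongr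
      _ = 2 * Real.sin (τ/2) * ((n:ℝ)+1) := by ring
  have h6 : |2 * Real.log (Real.sin (τ/2))| = -(2 * Real.log (Real.sin (τ/2))) :=
    abs_of_nonpos (by linarith)
  rw [h6]
  nlinarith [abs_nonneg (Real.sin (((n:ℝ)+1)*τ)), h5, hlog0, hpos']

private lemma key_integral (n : ℕ) :
    ∫ τ in (0:ℝ)..(2*π), Real.log ((Real.sin (τ/2))^2) * Real.cos (((n:ℝ)+1)*τ)
      = -(2*π) / ((n:ℝ)+1) := by
  have hπ := Real.pi_pos
  set N : ℝ := (n:ℝ)+1 with hNdef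
  have hN0 : (0:ℝ) < N := by positivity
  set F : ℝ → ℝ := fun τ => Real.sin (N*τ)/N * Real.log ((Real.sin (τ/2))^2)
    - (1/N) * (τ + Real.sin (N*τ)/N
        + 2 * ∑ k ∈ Finset.range n, Real.sin (((k:ℝ)+1)*τ)/((k:ℝ)+1)) with hF
  have hF0 : F 0 = 0 := by
    simp [hF]
  have hsinN2π : Real.sin (N * (2*π)) = 0 := by
    have : N * (2*π) = ((2*(n+1) : ℕ) : ℝ) * π := by push_cast [hNdef]; ring
    rw [this, Real.sin_nat_mul_pi]
  have hF2π : F (2*π) = -(2*π)/N := by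
    rw [hF]
    simp only
    rw [hsinN2π]
    have hsum : ∀ k ∈ Finset.range n, Real.sin (((k:ℝ)+1)*(2*π))/((k:ℝ)+1) = 0 := by
      intro k _
      have : ((k:ℝ)+1) * (2*π) = ((2*(k+1) : ℕ) : ℝ) * π := by push_cast; ring
      rw [this, Real.sin_nat_mul_pi, zero_div]
    rw [Finset.sum_congr rfl hsum]
    simp
    field_simp
  have hcont : ContinuousOn F (Set.Icc 0 (2*π)) := by
    have hH : Continuous (fun τ : ℝ => (1/N) * (τ + Real.sin (N*τ)/N
        + 2 * ∑ k ∈ Finset.range n, Real.sin (((k:ℝ)+1)*τ)/((k:ℝ)+1))) := by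
      apply Continuous.mul continuous_const
      apply Continuous.add
      apply Continuous.add continuous_id
      · exact (Real.continuous_sin.comp (continuous_const.mul continuous_id)).div_const N
      · apply Continuous.mul continuous_const
        apply continuous_finset_sum
        intro k _
        exact (Real.continuous_sin.comp (continuous_const.mul continuous_id)).div_const _
    have hG : ContinuousOn (fun τ : ℝ => Real.sin (N*τ)/N * Real.log ((Real.sin (τ/2))^2))
        (Set.Icc 0 (2*π)) := by
      intro x hx
      rcases lt_or_eq_of_le hx.1 with hx0 | hx0
      · rcases lt_or_eq_of_le hx.2 with hx2 | hx2
        · -- interior point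
          apply ContinuousAt.continuousWithinAt
          have hsx : Real.sin (x/2) ≠ 0 :=
            ne_of_gt (Real.sin_pos_of_pos_of_lt_pi (by linarith) (by linarith))
          apply ContinuousAt.mul
          · exact ((Real.continuous_sin.comp (continuous_const.mul continuous_id)).div_const N).continuousAt
          · have hin : ContinuousAt (fun τ : ℝ => (Real.sin (τ/2))^2) x := by fun_prop
            exact hin.log (pow_ne_zero 2 hsx)
        · -- x = 2π
          subst hx2
          rw [← continuousWithinAt_diff_self, Set.Icc_sdiff_right]
          have hsin2 : Tendsto (fun τ => Real.sin (τ/2)) (nhdsWithin (2*π) (Set.Ico 0 (2*π)))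
              (nhdsWithin 0 (Set.Ioi 0)) := by
            rw [tendsto_nhdsWithin_iff]
            constructor
            · apply Tendsto.mono_left _ nhdsWithin_le_nhds
              exact (Real.continuous_sin.comp (continuous_id.div_const 2)).tendsto' (2*π) 0
                (by show Real.sin (2*π/2) = 0; rw [show 2*π/2 = π by ring, Real.sin_pi])
            · rw [eventually_nhdsWithin_iff]
              filter_upwards [Ioi_mem_nhds (by linarith : (0:ℝ) < 2*π)] with τ h1 h2
              have h1' : (0:ℝ) < τ := by simpa using h1
              exact Real.sin_pos_of_pos_of_lt_pi (by linarith) (by have := h2.2; linarith)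
          have ht := tendsto_G n (2*π) (Set.Ico 0 (2*π)) Set.Ico_subset_Icc_self hsin2
          rw [← hNdef] at ht
          have hval : Real.sin (N*(2*π))/N * Real.log ((Real.sin ((2*π)/2))^2) = 0 := by
            rw [hsinN2π]; simp
          unfold ContinuousWithinAt
          simp only []
          rw [hval]
          exact ht
      · -- x = 0
        rw [← hx0] at hx ⊢
        rw [← continuousWithinAt_diff_self, Set.Icc_diff_left]
        have hsin0 : Tendsto (fun τ => Real.sin (τ/2)) (nhdsWithin 0 (Set.Ioc 0 (2*π)))
            (nhdsWithin 0 (Set.Ioi 0)) := by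
          rw [tendsto_nhdsWithin_iff]
          constructor
          · apply Tendsto.mono_left _ nhdsWithin_le_nhds
            exact (Real.continuous_sin.comp (continuous_id.div_const 2)).tendsto' 0 0
              (by show Real.sin (0/2) = 0; norm_num)
          · rw [eventually_nhdsWithin_iff]
            filter_upwards [Iio_mem_nhds (by linarith : (0:ℝ) < 2*π)] with τ h1 h2
            have h1' : τ < 2*π := by simpa using h1
            exact Real.sin_pos_of_pos_of_lt_pi (by linarith [h2.1]) (by linarith)
        have ht := tendsto_G n 0 (Set.Ioc 0 (2*π)) Set.Ioc_subset_Icc_self hsin0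
        rw [← hNdef] at ht
        have hval : Real.sin (N*0)/N * Real.log ((Real.sin ((0:ℝ)/2))^2) = 0 := by simp
        unfold ContinuousWithinAt
        simp only []
        rw [hval]
        exact ht
    exact hG.sub hH.continuousOn
  have hderiv : ∀ x ∈ Set.Ioo (0:ℝ) (2*π),
      HasDerivWithinAt F (Real.log ((Real.sin (x/2))^2) * Real.cos (N*x)) (Set.Ioi x) x := by
    intro x hx
    have hsx : 0 < Real.sin (x/2) :=
      Real.sin_pos_of_pos_of_lt_pi (by linarith [hx.1]) (by linarith [hx.2])
    have hsx' : Real.sin (x/2) ≠ 0 := ne_of_gt hsx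
    have d0 : HasDerivAt (fun τ : ℝ => Real.sin (N*τ)) (Real.cos (N*x) * N) x := by
      simpa [Function.comp_def] using (Real.hasDerivAt_sin (N*x)).comp x ((hasDerivAt_id x).const_mul N)
    have dhalf : HasDerivAt (fun τ : ℝ => Real.sin (τ/2)) (Real.cos (x/2) * (1/2)) x := by
      simpa [Function.comp_def] using (Real.hasDerivAt_sin (x/2)).comp x ((hasDerivAt_id x).div_const 2)
    have dsq : HasDerivAt (fun τ : ℝ => (Real.sin (τ/2))^2)
        (2 * Real.sin (x/2) * (Real.cos (x/2) * (1/2))) x := by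
      simpa using dhalf.fun_pow 2
    have dlog : HasDerivAt (fun τ : ℝ => Real.log ((Real.sin (τ/2))^2))
        ((2 * Real.sin (x/2) * (Real.cos (x/2) * (1/2))) / (Real.sin (x/2))^2) x :=
      dsq.log (pow_ne_zero 2 hsx')
    have dsum : HasDerivAt
        (fun τ : ℝ => ∑ k ∈ Finset.range n, Real.sin (((k:ℝ)+1)*τ)/((k:ℝ)+1))
        (∑ k ∈ Finset.range n, Real.cos (((k:ℝ)+1)*x)) x := by
      apply HasDerivAt.fun_sum
      intro k _
      have hk0 : ((k:ℝ)+1) ≠ 0 := by positivity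
      have h : HasDerivAt (fun τ : ℝ => Real.sin (((k:ℝ)+1)*τ))
          (Real.cos (((k:ℝ)+1)*x) * ((k:ℝ)+1)) x := by
        simpa [Function.comp_def] using (Real.hasDerivAt_sin _).comp x ((hasDerivAt_id x).const_mul ((k:ℝ)+1))
      have h2 := h.div_const ((k:ℝ)+1)
      simpa [mul_div_assoc, mul_div_cancel_right₀ _ hk0] using h2
    have dF : HasDerivAt F
        ((Real.cos (N*x) * N / N) * Real.log ((Real.sin (x/2))^2)
          + Real.sin (N*x)/N * ((2 * Real.sin (x/2) * (Real.cos (x/2) * (1/2))) / (Real.sin (x/2))^2)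
          - (1/N) * ((1 + Real.cos (N*x) * N / N)
              + 2 * ∑ k ∈ Finset.range n, Real.cos (((k:ℝ)+1)*x))) x := by
      exact ((d0.div_const N).mul dlog).sub
        ((((hasDerivAt_id' x).add (d0.div_const N)).add (dsum.const_mul 2)).const_mul (1/N))
    apply HasDerivAt.hasDerivWithinAt
    convert dF using 1
    · rfl
    · rfl
    have hdir := dirichlet n x
    rw [← hNdef] at hdir
    field_simp
    simp only [mul_comm _ x] at hdir
    linear_combination (-1) * hdir
  have hint := integrand_integrable N
  have := intervalIntegral.integral_eq_sub_of_hasDeriv_right_of_le (by linarith : (0:ℝ) ≤ 2*π)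
    hcont hderiv hint
  rw [this, hF2π, hF0, sub_zero]

/-- Kussmaul–Martensen quadrature identity:
−(1/(2π)) ∫₀^{2π} log(sin²(τ/2)) cos(mτ) dτ = 1/|m| for every nonzero integer m. -/
theorem stmt16 (m : ℤ) (hm : m ≠ 0) :
    -(1 / (2 * π)) * ∫ τ in (0 : ℝ)..(2 * π),
        Real.log ((Real.sin (τ / 2)) ^ 2) * Real.cos ((m : ℝ) * τ)
      = 1 / |(m : ℝ)| := by
  have hπ := Real.pi_pos
  obtain ⟨k, hk⟩ : ∃ k : ℕ, m.natAbs = k + 1 := ⟨m.natAbs - 1, by omega⟩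
  have habs : |(m : ℝ)| = (k:ℝ)+1 := by
    rw [← Int.cast_abs, Int.abs_eq_natAbs, hk]
    push_cast; ring
  have hcos : ∀ τ : ℝ, Real.cos ((m:ℝ)*τ) = Real.cos (((k:ℝ)+1)*τ) := by
    intro τ
    rcases abs_eq (by positivity : (0:ℝ) ≤ (k:ℝ)+1) |>.mp habs with h | h
    · rw [h]
    · rw [h, neg_mul, Real.cos_neg]
  simp only [hcos]
  rw [key_integral k, habs]
  field_simp
end
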